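/- Let W be any subset of the 16 vertices range b ∪ range (fun i => −b i) of the eight-dimensional cross-polytope and let P = convexHull ℝ W. Then every vertex of P fails to be joined by an edge to at most one other vertex: for all pairwise distinct x, y, z ∈ W, at least one of the segments from x to y and from x to z is a face of P, i.e. IsExtreme ℝ P (segment ℝ x y) or IsExtreme ℝ P (segment ℝ x z) holds. -/

import Mathlib

open Set


private lemma l1ball (B : Module.Basis (Fin 8) ℝ (EuclideanSpace ℝ (Fin 8))) (p : EuclideanSpace ℝ (Fin 8))
    (hp : p ∈ convexHull ℝ (range ⇑B ∪ range (fun i => -B i))) :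
    ∑ k, |B.repr p k| ≤ 1 := by
  have hconv : Convex ℝ {x : EuclideanSpace ℝ (Fin 8) | ∑ k, |B.repr x k| ≤ 1} := by
    intro x hx y hy a c ha hc hac
    simp only [mem_setOf_eq, map_add, map_smul] at *
    calc ∑ k, |(a • B.repr x + c • B.repr y) k| ≤ ∑ k, (a * |B.repr x k| + c * |B.repr y k|) := by
          refine Finset.sum_le_sum fun k _ => ?_
          simp only [Finsupp.add_apply, Finsupp.smul_apply, smul_eq_mul]
          calc |a * B.repr x k + c * B.repr y k| ≤ |a * B.repr x k| + |c * B.repr y k| := abs_add_le _ _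
            _ = a * |B.repr x k| + c * |B.repr y k| := by
                rw [abs_mul, abs_mul, abs_of_nonneg ha, abs_of_nonneg hc]
      _ = a * ∑ k, |B.repr x k| + c * ∑ k, |B.repr y k| := by
          rw [Finset.sum_add_distrib, Finset.mul_sum, Finset.mul_sum]
      _ ≤ a * 1 + c * 1 := by gcongr
      _ = 1 := by linarith
  refine convexHull_min ?_ hconv hp
  rintro x (⟨m, rfl⟩ | ⟨m, rfl⟩) <;>
  · simp only [mem_setOf_eq, map_neg, Finsupp.neg_apply, B.repr_self, abs_neg]
    rw [Finset.sum_eq_single m] <;> simp +contextual [Finsupp.single_apply, Ne.symm]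

private lemma seg_char (B : Module.Basis (Fin 8) ℝ (EuclideanSpace ℝ (Fin 8))) {i j : Fin 8} (hij : i ≠ j)
    {ε δ : ℝ} (hε : ε = 1 ∨ ε = -1) (hδ : δ = 1 ∨ δ = -1) (p : EuclideanSpace ℝ (Fin 8))
    (hp : p ∈ convexHull ℝ (range ⇑B ∪ range (fun i => -B i)))
    (hf : ε * B.repr p i + δ * B.repr p j = 1) :
    p ∈ segment ℝ (ε • B i) (δ • B j) := by
  set ci := B.repr p i with hci
  set cj := B.repr p j with hcj
  have hεa : |ε| = 1 := by rcases hε with h | h <;> simp [h]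
  have hδa : |δ| = 1 := by rcases hδ with h | h <;> simp [h]
  have h1 : ε * ci ≤ |ci| := by
    calc ε * ci ≤ |ε * ci| := le_abs_self _
      _ = |ci| := by rw [abs_mul, hεa, one_mul]
  have h2 : δ * cj ≤ |cj| := by
    calc δ * cj ≤ |δ * cj| := le_abs_self _
      _ = |cj| := by rw [abs_mul, hδa, one_mul]
  have hsum := l1ball B p hp
  have habs : |ci| + |cj| ≤ ∑ k, |B.repr p k| := by
    have := Finset.sum_le_sum_of_subset_of_nonneg (s := {i, j}) (t := Finset.univ)
      (f := fun k => |B.repr p k|) (Finset.subset_univ _) (fun k _ _ => abs_nonneg _)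
    rwa [Finset.sum_pair hij] at this
  have heq1 : ε * ci = |ci| ∧ δ * cj = |cj| := by constructor <;> linarith
  have hzero : ∀ k, k ≠ i → k ≠ j → B.repr p k = 0 := by
    intro k hki hkj
    by_contra hk
    have hpos : 0 < |B.repr p k| := abs_pos.2 hk
    have h3 := Finset.sum_le_sum_of_subset_of_nonneg (s := {i, j, k}) (t := Finset.univ)
      (f := fun m => |B.repr p m|) (Finset.subset_univ _) (fun m _ _ => abs_nonneg _)
    rw [Finset.sum_insert (by simp [hij, Ne.symm hki]), Finset.sum_pair (Ne.symm hkj)] at h3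
    linarith
  -- p = ci • B i + cj • B j
  have hrep : p = ci • B i + cj • B j := by
    have := B.sum_repr p
    rw [← this, Finset.sum_eq_add_of_mem i j (Finset.mem_univ _) (Finset.mem_univ _) hij
      (fun k _ hk => by rw [hzero k hk.1 hk.2, zero_smul])]
  have hε2 : ε * ε = 1 := by rcases hε with h | h <;> simp [h]
  have hδ2 : δ * δ = 1 := by rcases hδ with h | h <;> simp [h]
  refine ⟨ε * ci, δ * cj, by rw [heq1.1]; exact abs_nonneg _, by rw [heq1.2]; exact abs_nonneg _, hf, ?_⟩
  rw [hrep, smul_smul, smul_smul, mul_assoc, mul_comm ci ε, ← mul_assoc, hε2, one_mul,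
    mul_assoc, mul_comm cj δ, ← mul_assoc, hδ2, one_mul]

private lemma extreme_seg (B : Module.Basis (Fin 8) ℝ (EuclideanSpace ℝ (Fin 8))) {i j : Fin 8} (hij : i ≠ j)
    {ε δ : ℝ} (hε : ε = 1 ∨ ε = -1) (hδ : δ = 1 ∨ δ = -1) :
    IsExtreme ℝ (convexHull ℝ (range ⇑B ∪ range (fun i => -B i)))
      (segment ℝ (ε • B i) (δ • B j)) := by
  set Q := convexHull ℝ (range ⇑B ∪ range (fun i => -B i)) with hQ
  have hle : ∀ q ∈ Q, ε * B.repr q i + δ * B.repr q j ≤ 1 := by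
    intro q hq
    have hεa : |ε| = 1 := by rcases hε with h | h <;> simp [h]
    have hδa : |δ| = 1 := by rcases hδ with h | h <;> simp [h]
    have hsum := l1ball B q hq
    have habs : |B.repr q i| + |B.repr q j| ≤ ∑ k, |B.repr q k| := by
      have := Finset.sum_le_sum_of_subset_of_nonneg (s := {i, j}) (t := Finset.univ)
        (f := fun k => |B.repr q k|) (Finset.subset_univ _) (fun k _ _ => abs_nonneg _)
      rwa [Finset.sum_pair hij] at this
    have h1 : ε * B.repr q i ≤ |B.repr q i| := by
      calc ε * B.repr q i ≤ |ε * B.repr q i| := le_abs_self _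
        _ = |B.repr q i| := by rw [abs_mul, hεa, one_mul]
    have h2 : δ * B.repr q j ≤ |B.repr q j| := by
      calc δ * B.repr q j ≤ |δ * B.repr q j| := le_abs_self _
        _ = |B.repr q j| := by rw [abs_mul, hδa, one_mul]
    linarith
  have hval : ∀ q ∈ segment ℝ (ε • B i) (δ • B j), ε * B.repr q i + δ * B.repr q j = 1 := by
    rintro q ⟨a, c, ha, hc, hac, rfl⟩
    have hε2 : ε * ε = 1 := by rcases hε with h | h <;> simp [h]
    have hδ2 : δ * δ = 1 := by rcases hδ with h | h <;> simp [h]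
    simp only [map_add, map_smul, Finsupp.add_apply, Finsupp.smul_apply, smul_eq_mul,
      B.repr_self, Finsupp.single_apply, hij, Ne.symm hij, if_true, if_false, if_neg]
    simp [Finsupp.single_apply, hij, Ne.symm hij]
    ring_nf
    nlinarith [hε2, hδ2, hac]
  constructor
  · -- segment ⊆ Q
    have hu : (ε • B i : EuclideanSpace ℝ (Fin 8)) ∈ Q := by
      rcases hε with h | h
      · exact subset_convexHull ℝ _ (Or.inl ⟨i, by rw [h, one_smul]⟩)
      · exact subset_convexHull ℝ _ (Or.inr ⟨i, by rw [h]; simp⟩)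
    have hv : (δ • B j : EuclideanSpace ℝ (Fin 8)) ∈ Q := by
      rcases hδ with h | h
      · exact subset_convexHull ℝ _ (Or.inl ⟨j, by rw [h, one_smul]⟩)
      · exact subset_convexHull ℝ _ (Or.inr ⟨j, by rw [h]; simp⟩)
    exact (convex_convexHull ℝ _).segment_subset hu hv
  · rintro x₁ hx₁ x₂ hx₂ x hx ⟨a, c, ha, hc, hac, hxeq⟩
    have hfx : ε * B.repr x i + δ * B.repr x j = 1 := hval x hx
    have hfx₁ : ε * B.repr x₁ i + δ * B.repr x₁ j = 1 := by
      have e1 := hle x₁ hx₁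
      have e2 := hle x₂ hx₂
      have : a * (ε * B.repr x₁ i + δ * B.repr x₁ j) + c * (ε * B.repr x₂ i + δ * B.repr x₂ j) = 1 := by
        rw [← hfx, ← hxeq]; simp only [map_add, map_smul, Finsupp.add_apply,
          Finsupp.smul_apply, smul_eq_mul]; ring
      nlinarith
    have hfx₂ : ε * B.repr x₂ i + δ * B.repr x₂ j = 1 := by
      have e1 := hle x₁ hx₁
      have : a * (ε * B.repr x₁ i + δ * B.repr x₁ j) + c * (ε * B.repr x₂ i + δ * B.repr x₂ j) = 1 := by
        rw [← hfx, ← hxeq]; simp only [map_add, map_smul, Finsupp.add_apply,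
          Finsupp.smul_apply, smul_eq_mul]; ring
      nlinarith
    exact seg_char B hij hε hδ x₁ hx₁ hfx₁

private lemma isExtreme_restrict {E : Type*} [AddCommGroup E] [Module ℝ E]
    {Q P F : Set E} (h : IsExtreme ℝ Q F) (hPQ : P ⊆ Q) (hFP : F ⊆ P) : IsExtreme ℝ P F :=
  ⟨hFP, fun _ hx₁ _ hx₂ _ hx hxo => h.2 (hPQ hx₁) (hPQ hx₂) hx hxo⟩

open Set in
/-- For any subset `W` of the 16 vertices of the eight-dimensional cross-polytope
(a Delone polytope of `E8`) and `P = convexHull ℝ W`, every vertex of `P` fails to be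
joined by an edge to at most one other vertex: for pairwise distinct `x, y, z ∈ W`,
at least one of the segments `[x, y]` and `[x, z]` is a face of `P`. -/
theorem stmt_16
    (b : Fin 8 → EuclideanSpace ℝ (Fin 8))
    (hb : LinearIndependent ℝ b)
    (W : Set (EuclideanSpace ℝ (Fin 8)))
    (hW : W ⊆ range b ∪ range (fun i => -b i))
    (P : Set (EuclideanSpace ℝ (Fin 8)))
    (hP : P = convexHull ℝ W) :
    ∀ x ∈ W, ∀ y ∈ W, ∀ z ∈ W, x ≠ y → x ≠ z → y ≠ z →
      IsExtreme ℝ P (segment ℝ x y) ∨ IsExtreme ℝ P (segment ℝ x z) := by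
  intro x hx y hy z hz hxy hxz hyz
  set B := basisOfLinearIndependentOfCardEqFinrank hb (by simp) with hBdef
  have hBb : ⇑B = b := coe_basisOfLinearIndependentOfCardEqFinrank hb _
  have hPQ : P ⊆ convexHull ℝ (range ⇑B ∪ range (fun i => -B i)) := by
    rw [hP, hBb]; exact convexHull_mono hW
  have hrep : ∀ w ∈ W, ∃ ε : ℝ, ∃ i : Fin 8, (ε = 1 ∨ ε = -1) ∧ w = ε • B i := by
    intro w hw
    rcases hW hw with ⟨i, rfl⟩ | ⟨i, rfl⟩
    · exact ⟨1, i, Or.inl rfl, by rw [hBb, one_smul]⟩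
    · exact ⟨-1, i, Or.inr rfl, by rw [hBb]; simp⟩
  obtain ⟨ε, ix, hε, rfl⟩ := hrep x hx
  obtain ⟨δ, iy, hδ, rfl⟩ := hrep y hy
  obtain ⟨γ, iz, hγ, rfl⟩ := hrep z hz
  have hPconv : Convex ℝ P := hP ▸ convex_convexHull ℝ W
  have hsub : ∀ u ∈ W, ∀ v ∈ W, segment ℝ u v ⊆ P := fun u hu v hv =>
    hPconv.segment_subset (hP ▸ subset_convexHull ℝ W hu) (hP ▸ subset_convexHull ℝ W hv)
  have hinj : ∀ (i : Fin 8) (a c : ℝ), a • B i = c • B i → a = c := by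
    intro i a c h
    have h' : (a - c) • B i = 0 := by rw [sub_smul, h, sub_self]
    rcases smul_eq_zero.1 h' with h0 | h0
    · exact sub_eq_zero.1 h0
    · exact absurd h0 (B.ne_zero i)
  by_cases h1 : ix = iy
  · subst h1
    by_cases h2 : ix = iz
    · subst h2
      exfalso
      have e1 : ε ≠ δ := fun h => hxy (by rw [h])
      have e2 : ε ≠ γ := fun h => hxz (by rw [h])
      have e3 : δ ≠ γ := fun h => hyz (by rw [h])
      rcases hε with rfl | rfl <;> rcases hδ with rfl | rfl <;> rcases hγ with rfl | rfl <;>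
        first | exact e1 rfl | exact e2 rfl | exact e3 rfl
    · exact Or.inr (isExtreme_restrict (extreme_seg B h2 hε hγ) hPQ (hsub _ hx _ hz))
  · exact Or.inl (isExtreme_restrict (extreme_seg B h1 hε hδ) hPQ (hsub _ hx _ hy))
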